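/- Let Γ = {μ ∈ 𝒫_𝒳 : f_{𝐏_0}(α,μ) > f_{𝐏_1}(α,μ)} and h = inf{ Σ_{k=1}^K n_k D(U_k‖p_{0,k}) : U_1,…,U_K ∈ 𝒫_𝒳, Σ_k α_k U_k ∈ Γ }, where α_k = n_k/n. Let Y = inf{t ≥ 1 : Ŵ[t] ≤ 0} be the first regeneration time of the computationally efficient statistic. Then for every label sequence Ω and every integer m ≥ 1, ℙ^∞_Ω(Y > m) ≤ (∏_{k=1}^K |𝒫_{m n_k}|) · e^{−m h}. -/

import Mathlib

open scoped ENNReal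

/-- Kullback–Leibler divergence `D(U‖P)` between two probability vectors on a finite
alphabet, with value `∞` when `U` is not absolutely continuous with respect to `P`. -/
noncomputable def klD {𝒳 : Type*} [Fintype 𝒳] (U P : 𝒳 → ℝ) : ℝ≥0∞ := by
  classical
  exact if (∀ x, P x = 0 → U x = 0)
    then ENNReal.ofReal (∑ x, U x * Real.log (U x / P x)) else ⊤

/-- `f_P(α, Q) = inf { ∑_k α_k D(U_k‖P_k) : U_k probability vectors, ∑_k α_k U_k = Q }`. -/
noncomputable def fP {𝒳 : Type*} [Fintype 𝒳] {K : ℕ} (α : Fin K → ℝ)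
    (P : Fin K → 𝒳 → ℝ) (Q : 𝒳 → ℝ) : ℝ≥0∞ :=
  ⨅ (U : Fin K → 𝒳 → ℝ) (_ : (∀ k, (∀ x, 0 ≤ U k x) ∧ ∑ x, U k x = 1)
      ∧ ∀ x, ∑ k, α k * U k x = Q x),
    ∑ k, ENNReal.ofReal (α k) * klD (U k) (P k)

/-- The set `𝒫_m` of types (empirical distributions) on `𝒳` with denominator `m`. -/
def typeSet (𝒳 : Type*) [Fintype 𝒳] (m : ℕ) : Set (𝒳 → ℝ) :=
  {q | ∃ c : 𝒳 → ℕ, (∀ x, q x = (c x : ℝ) / m) ∧ ∑ x, c x = m}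

/-- Empirical distribution of all `n`-sensor samples observed at times `a, a+1, …, t`
(time is indexed from `0`). -/
noncomputable def empSeg {𝒳 : Type*} [Fintype 𝒳] [DecidableEq 𝒳] (n : ℕ)
    (ω : ℕ → Fin n → 𝒳) (a t : ℕ) : 𝒳 → ℝ :=
  fun x => (((Finset.Icc a t ×ˢ (Finset.univ : Finset (Fin n))).filter
      (fun q => ω q.1 q.2 = x)).card : ℝ) / (((t - a + 1) * n : ℕ) : ℝ)

/-- The efficient statistic at time `t` if the current change-point estimate is `a`:
`(t − a + 1) · n · [ f_{P0}(α, Π_{ω[a,t]}) − f_{P1}(α, Π_{ω[a,t]}) ]` (as extended reals). -/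
noncomputable def Wstat {𝒳 : Type*} [Fintype 𝒳] [DecidableEq 𝒳] {K : ℕ} (n : ℕ)
    (α : Fin K → ℝ) (P0 P1 : Fin K → 𝒳 → ℝ) (ω : ℕ → Fin n → 𝒳) (a t : ℕ) : EReal :=
  (((((t - a + 1) * n : ℕ)) : ℝ) : EReal) *
    ((fP α P0 (empSeg n ω a t) : EReal) - (fP α P1 (empSeg n ω a t) : EReal))

/-- The recursively updated change-point estimate `ν̂_t` (time indexed from `0`, so `ν̂_0 = 0`;
`ν̂_{t+1} = t+1` if `Ŵ[t] ≤ 0` and `ν̂_{t+1} = ν̂_t` otherwise). -/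
noncomputable def nuhat {𝒳 : Type*} [Fintype 𝒳] [DecidableEq 𝒳] {K : ℕ} (n : ℕ)
    (α : Fin K → ℝ) (P0 P1 : Fin K → 𝒳 → ℝ) (ω : ℕ → Fin n → 𝒳) : ℕ → ℕ := by
  classical
  exact fun t => Nat.rec 0
    (fun s prev => if Wstat n α P0 P1 ω prev s ≤ 0 then s + 1 else prev) t

/-- The computationally efficient detection statistic `Ŵ[t]`. -/
noncomputable def What {𝒳 : Type*} [Fintype 𝒳] [DecidableEq 𝒳] {K : ℕ} (n : ℕ)
    (α : Fin K → ℝ) (P0 P1 : Fin K → 𝒳 → ℝ) (ω : ℕ → Fin n → 𝒳) (t : ℕ) : EReal :=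
  Wstat n α P0 P1 ω (nuhat n α P0 P1 ω t) t

/-- Extension of a finite prefix of observations to an infinite path (the values beyond the
prefix are irrelevant for the statistics computed on the prefix). -/
noncomputable def extendPath {𝒳 : Type*} [Nonempty 𝒳] (n m : ℕ)
    (w : Fin m → Fin n → 𝒳) : ℕ → Fin n → 𝒳 :=
  fun t => if h : t < m then w ⟨t, h⟩ else fun _ => Classical.arbitrary 𝒳

section AuxSTMT14

variable {𝒳 : Type*} [Fintype 𝒳]

lemma klD_of_ac {U P : 𝒳 → ℝ} (h : ∀ x, P x = 0 → U x = 0) :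
    klD U P = ENNReal.ofReal (∑ x, U x * Real.log (U x / P x)) := by
  simp only [klD]; rw [if_pos h]

lemma aux_gibbs (p U : 𝒳 → ℝ) (hp0 : ∀ x, 0 ≤ p x) (hp1 : ∑ x, p x = 1)
    (hU0 : ∀ x, 0 ≤ U x) (hU1 : ∑ x, U x = 1) (hac : ∀ x, p x = 0 → U x = 0) :
    0 ≤ ∑ x, U x * Real.log (U x / p x) := by
  have hpx : ∀ x, 0 < U x → 0 < p x := by
    intro x hUx
    rcases eq_or_lt_of_le (hp0 x) with h0 | h0
    · exact absurd (hac x h0.symm) hUx.ne'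
    · exact h0
  have key : ∀ x, U x * Real.log (p x / U x) ≤ p x - U x := by
    intro x
    rcases eq_or_lt_of_le (hU0 x) with h0 | h0
    · rw [← h0]; simpa using hp0 x
    · have hlog := Real.log_le_sub_one_of_pos (div_pos (hpx x h0) h0)
      have h2 := mul_le_mul_of_nonneg_left hlog (le_of_lt h0)
      calc U x * Real.log (p x / U x) ≤ U x * (p x / U x - 1) := h2
        _ = p x - U x := by field_simp
  have hsum : ∑ x, U x * Real.log (p x / U x) ≤ 0 := by
    calc ∑ x, U x * Real.log (p x / U x) ≤ ∑ x, (p x - U x) :=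
          Finset.sum_le_sum (fun x _ => key x)
      _ = 0 := by rw [Finset.sum_sub_distrib, hp1, hU1, sub_self]
  have hneg : ∑ x, U x * Real.log (U x / p x) = -∑ x, U x * Real.log (p x / U x) := by
    rw [← Finset.sum_neg_distrib]
    refine Finset.sum_congr rfl fun x _ => ?_
    rcases eq_or_lt_of_le (hU0 x) with h0 | h0
    · rw [← h0]; ring
    · rw [Real.log_div h0.ne' (hpx x h0).ne', Real.log_div (hpx x h0).ne' h0.ne']; ring
  rw [hneg]; linarith

lemma aux_perk (p U : 𝒳 → ℝ) (c : 𝒳 → ℕ) (N : ℕ)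
    (hp0 : ∀ x, 0 ≤ p x) (hp1 : ∑ x, p x = 1)
    (hU0 : ∀ x, 0 ≤ U x) (hU1 : ∑ x, U x = 1)
    (hcU : ∀ x, (c x : ℝ) = U x * N) :
    ENNReal.ofReal (∏ x, p x ^ c x)
      ≤ EReal.exp (-((((N : ℝ≥0∞) * klD U p : ℝ≥0∞)) : EReal))
        * ENNReal.ofReal (∏ x, U x ^ c x) := by
  rcases Nat.eq_zero_or_pos N with hN | hN
  · subst hN
    have hc : ∀ x, c x = 0 := fun x =>
      Nat.cast_eq_zero.mp (by rw [hcU x]; simp)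
    simp [hc]
  · by_cases hac : ∀ x, p x = 0 → U x = 0
    · have hNR : (0:ℝ) < N := by exact_mod_cast hN
      have hkl := klD_of_ac (U := U) (P := p) hac
      set S := ∑ x, U x * Real.log (U x / p x) with hSdef
      have hS0 : 0 ≤ S := aux_gibbs p U hp0 hp1 hU0 hU1 hac
      have hε : (-((((N : ℝ≥0∞) * klD U p : ℝ≥0∞)) : EReal)) = ((-((N:ℝ) * S) : ℝ) : EReal) := by
        rw [hkl, ← ENNReal.ofReal_natCast, ← ENNReal.ofReal_mul (by positivity)]
        rw [EReal.coe_ennreal_ofReal, max_eq_left (by positivity), ← EReal.coe_neg]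
      rw [hε, EReal.exp_coe, ← ENNReal.ofReal_mul (Real.exp_nonneg _)]
      apply ENNReal.ofReal_le_ofReal
      have hkey : Real.exp ((N:ℝ) * S) * ∏ x, p x ^ c x = ∏ x, U x ^ c x := by
        have hNS : (N:ℝ) * S = ∑ x, (c x : ℝ) * Real.log (U x / p x) := by
          rw [hSdef, Finset.mul_sum]
          exact Finset.sum_congr rfl fun x _ => by rw [hcU x]; ring
        rw [hNS, Real.exp_sum, ← Finset.prod_mul_distrib]
        refine Finset.prod_congr rfl fun x _ => ?_
        rcases Nat.eq_zero_or_pos (c x) with h0 | h0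
        · simp [h0]
        · have hUx : 0 < U x := by
            have hcp : (0:ℝ) < (c x : ℝ) := by exact_mod_cast h0
            rw [hcU x] at hcp
            nlinarith [hU0 x]
          have hpx : 0 < p x :=
            lt_of_le_of_ne (hp0 x) (fun hh => hUx.ne' (hac x hh.symm))
          rw [Real.exp_nat_mul, Real.exp_log (div_pos hUx hpx), div_pow,
            div_mul_cancel₀ _ (pow_ne_zero _ hpx.ne')]
      apply le_of_eq
      calc ∏ x, p x ^ c x
          = (Real.exp (-((N:ℝ) * S)) * Real.exp ((N:ℝ) * S)) * ∏ x, p x ^ c x := by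
            rw [← Real.exp_add, neg_add_cancel, Real.exp_zero, one_mul]
        _ = Real.exp (-((N:ℝ) * S)) * ∏ x, U x ^ c x := by rw [mul_assoc, hkey]
    · push_neg at hac
      obtain ⟨x0, hpx0, hUx0⟩ := hac
      have hcx0 : c x0 ≠ 0 := by
        intro h0
        have h1 := hcU x0
        rw [h0] at h1
        simp only [Nat.cast_zero] at h1
        rcases mul_eq_zero.mp h1.symm with h | h
        · exact hUx0 h
        · exact (by exact_mod_cast hN.ne' : (N:ℝ) ≠ 0) h
      have : ∏ x, p x ^ c x = 0 :=
        Finset.prod_eq_zero (Finset.mem_univ x0) (by rw [hpx0]; exact zero_pow hcx0)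
      rw [this]; simp

lemma aux_exp_sum {ι : Type*} (s : Finset ι) (a : ι → ℝ≥0∞) :
    ∏ k ∈ s, EReal.exp (-(a k : EReal)) = EReal.exp (-((∑ k ∈ s, a k : ℝ≥0∞) : EReal)) := by
  induction s using Finset.cons_induction with
  | empty => simp
  | cons i s hi ih =>
    rw [Finset.prod_cons, Finset.sum_cons, ih, ← EReal.exp_add, EReal.coe_ennreal_add,
      EReal.neg_add (Or.inl (EReal.coe_ennreal_ne_bot _)) (Or.inr (EReal.coe_ennreal_ne_bot _)),
      sub_eq_add_neg]

lemma aux_sum_prod {m n : ℕ} (F : Fin m → Fin n → 𝒳 → ℝ≥0∞) :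
    ∑ w : Fin m → Fin n → 𝒳, ∏ t, ∏ i, F t i (w t i) = ∏ t, ∏ i, ∑ x, F t i x := by
  classical
  rw [← Fintype.prod_sum (f := fun (t : Fin m) (u : Fin n → 𝒳) => ∏ i, F t i (u i))]
  exact Finset.prod_congr rfl fun t _ => by rw [← Fintype.prod_sum]

lemma typeSet_finite (N : ℕ) : (typeSet 𝒳 N).Finite := by
  apply Set.Finite.subset
    (Set.finite_range (fun c : 𝒳 → Fin (N+1) => fun x => ((c x : ℕ) : ℝ) / N))
  rintro q ⟨c, hq, hc⟩
  refine ⟨fun x => ⟨c x, ?_⟩, ?_⟩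
  · have : c x ≤ N := hc ▸ Finset.single_le_sum
      (f := fun x => c x) (fun _ _ => Nat.zero_le _) (Finset.mem_univ x)
    omega
  · funext x; rw [hq x]

end AuxSTMT14

/-- Count of sensor/time pairs in group `k` observing symbol `x`. -/
def cntF {𝒳 : Type*} [DecidableEq 𝒳] {K m n : ℕ} (Ω : ℕ → Fin n → Fin K)
    (w : Fin m → Fin n → 𝒳) (k : Fin K) (x : 𝒳) : ℕ :=
  (Finset.univ.filter (fun q : Fin m × Fin n => (Ω (q.1 : ℕ) q.2, w q.1 q.2) = (k, x))).card

/-- Per-group empirical distributions built from a tuple of counts. -/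
noncomputable def VF {𝒳 : Type*} {K : ℕ} (p0 : Fin K → 𝒳 → ℝ) (nk : Fin K → ℕ) (m : ℕ)
    (v : Fin K → 𝒳 → ℕ) (k : Fin K) : 𝒳 → ℝ :=
  if nk k = 0 then p0 k else fun x => (v k x : ℝ) / ((m * nk k : ℕ) : ℝ)

set_option maxHeartbeats 2000000 in
open Classical in
/-- bound on the regeneration time of the efficient statistic.  With
`Γ = {μ ∈ 𝒫_𝒳 : f_{P0}(α,μ) > f_{P1}(α,μ)}`,
`h = inf{∑_k n_k D(U_k‖p_{0,k}) : ∑_k α_k U_k ∈ Γ}` and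
`Y = inf{t ≥ 1 : Ŵ[t] ≤ 0}` (paper time; `0`-based time `s = t − 1`), for every label
sequence `Ω` and every `m ≥ 1`,
`ℙ^∞_Ω(Y > m) ≤ (∏_k |𝒫_{m n_k}|) e^{−m h}`.
The event `{Y > m}` depends only on the first `m` observation vectors, and its probability
is written as the corresponding finite sum. -/
theorem stmt_14 {𝒳 : Type*} [Fintype 𝒳] [DecidableEq 𝒳] [Nonempty 𝒳]
    (n K : ℕ) (hnpos : 0 < n) (nk : Fin K → ℕ) (hn : ∑ k, nk k = n)
    (p : Bool → Fin K → 𝒳 → ℝ)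
    (hp : ∀ θ k, (∀ x, 0 ≤ p θ k x) ∧ ∑ x, p θ k x = 1)
    (α : Fin K → ℝ) (hα : ∀ k, α k = (nk k : ℝ) / n)
    (Ω : ℕ → Fin n → Fin K)
    (hΩ : ∀ t k, (Finset.univ.filter (fun i => Ω t i = k)).card = nk k)
    (Gam : Set (𝒳 → ℝ))
    (hGam : Gam = {q | ((∀ x, 0 ≤ q x) ∧ ∑ x, q x = 1)
      ∧ fP α (p true) q < fP α (p false) q})
    (h : ℝ≥0∞)
    (hh : h = ⨅ (U : Fin K → 𝒳 → ℝ)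
        (_ : (∀ k, (∀ x, 0 ≤ U k x) ∧ ∑ x, U k x = 1)
          ∧ (fun x => ∑ k, α k * U k x) ∈ Gam),
      ∑ k, ((nk k : ℕ) : ℝ≥0∞) * klD (U k) (p false k))
    (m : ℕ) (hm : 1 ≤ m) :
    ENNReal.ofReal
      (∑ w ∈ Finset.univ.filter (fun w : Fin m → Fin n → 𝒳 =>
          ∀ s : Fin m, 0 < What n α (p false) (p true) (extendPath n m w) s),
        ∏ t : Fin m, ∏ i, p false (Ω (t : ℕ) i) (w t i))
    ≤ (∏ k, (Nat.card (typeSet 𝒳 (m * nk k)) : ℝ≥0∞))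
        * EReal.exp (-(((m : ℝ≥0∞) * h : ℝ≥0∞) : EReal)) := by
  classical
  -- ### counting facts
  have hcnt_sum : ∀ (w : Fin m → Fin n → 𝒳) k, ∑ x, cntF Ω w k x = m * nk k := by
    intro w k
    have h0 : ∀ x : 𝒳, cntF Ω w k x =
        ((Finset.univ.filter (fun q : Fin m × Fin n => Ω (q.1 : ℕ) q.2 = k)).filter
          (fun q => w q.1 q.2 = x)).card := by
      intro x
      rw [cntF, Finset.filter_filter]
      congr 1
      apply Finset.filter_congr
      intro q _
      simp [Prod.ext_iff]
    have h1 : ∑ x, cntF Ω w k x =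
        (Finset.univ.filter (fun q : Fin m × Fin n => Ω (q.1 : ℕ) q.2 = k)).card := by
      rw [Finset.card_eq_sum_card_fiberwise
        (f := fun q : Fin m × Fin n => w q.1 q.2) (t := Finset.univ)
        (fun q _ => Finset.mem_univ _)]
      exact Finset.sum_congr rfl fun x _ => h0 x
    rw [h1, Finset.card_eq_sum_card_fiberwise
      (f := fun q : Fin m × Fin n => q.1) (t := Finset.univ) (fun q _ => Finset.mem_univ _)]
    have h2 : ∀ t : Fin m,
        ((Finset.univ.filter (fun q : Fin m × Fin n => Ω (q.1 : ℕ) q.2 = k)).filter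
          (fun q => q.1 = t)).card = nk k := by
      intro t
      rw [← hΩ (t : ℕ) k]
      refine Finset.card_nbij' (i := fun q : Fin m × Fin n => q.2) (j := fun i => (t, i))
        ?_ ?_ ?_ ?_
      · intro q hq
        simp only [Finset.coe_filter, Finset.mem_coe, Set.mem_setOf_eq, Finset.mem_filter, Finset.mem_univ, true_and] at hq ⊢
        rw [← hq.2]; exact hq.1
      · intro i hi
        simp only [Finset.coe_filter, Finset.mem_coe, Set.mem_setOf_eq, Finset.mem_filter, Finset.mem_univ, true_and] at hi ⊢
        exact ⟨hi, trivial⟩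
      · intro q hq
        simp only [Finset.coe_filter, Finset.mem_coe, Set.mem_setOf_eq, Finset.mem_filter, Finset.mem_univ, true_and] at hq
        exact Prod.ext hq.2.symm rfl
      · intro i _; rfl
    rw [Finset.sum_congr rfl fun t _ => h2 t, Finset.sum_const, Finset.card_univ,
      Fintype.card_fin, smul_eq_mul]
  have hcnt_zero : ∀ (w : Fin m → Fin n → 𝒳) k, nk k = 0 → ∀ x, cntF Ω w k x = 0 := by
    intro w k hk x
    have h0 : ∑ y, cntF Ω w k y = 0 := by rw [hcnt_sum w k, hk, mul_zero]
    exact Finset.sum_eq_zero_iff.mp h0 x (Finset.mem_univ x)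
  -- ### product decomposition by types
  have hprod : ∀ (w : Fin m → Fin n → 𝒳) (V : Fin K → 𝒳 → ℝ),
      (∏ t : Fin m, ∏ i, V (Ω (t : ℕ) i) (w t i)) = ∏ k, ∏ x, V k x ^ cntF Ω w k x := by
    intro w V
    have h1 : (∏ q : Fin m × Fin n, V (Ω (q.1 : ℕ) q.2) (w q.1 q.2))
        = ∏ t : Fin m, ∏ i, V (Ω (t : ℕ) i) (w t i) := by
      rw [← Finset.univ_product_univ, Finset.prod_product]
    rw [← h1, ← Finset.prod_fiberwise_of_maps_to
      (g := fun q : Fin m × Fin n => (Ω (q.1 : ℕ) q.2, w q.1 q.2))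
      (t := (Finset.univ : Finset (Fin K × 𝒳))) (fun q _ => Finset.mem_univ _)
      (fun q => V (Ω (q.1 : ℕ) q.2) (w q.1 q.2))]
    rw [← Finset.univ_product_univ, Finset.prod_product]
    refine Finset.prod_congr rfl fun k _ => Finset.prod_congr rfl fun x _ => ?_
    have hconst : ∀ q ∈ Finset.univ.filter
        (fun q : Fin m × Fin n => (Ω (q.1 : ℕ) q.2, w q.1 q.2) = (k, x)),
        V (Ω (q.1 : ℕ) q.2) (w q.1 q.2) = V k x := by
      intro q hq
      have h2 := (Finset.mem_filter.mp hq).2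
      rw [Prod.mk.injEq] at h2
      rw [h2.1, h2.2]
    rw [Finset.prod_congr rfl hconst, Finset.prod_const]
    rfl
  -- ### empirical distribution of the first m blocks
  have hemp : ∀ (w : Fin m → Fin n → 𝒳) (x : 𝒳),
      empSeg n (extendPath n m w) 0 (m - 1) x
        = (∑ k, (cntF Ω w k x : ℝ)) / ((m * n : ℕ) : ℝ) := by
    intro w x
    have hden : (m - 1 - 0 + 1) * n = m * n := by
      have hd : m - 1 - 0 + 1 = m := by omega
      rw [hd]
    have hnum : ∑ k, cntF Ω w k x =
        (Finset.univ.filter (fun q : Fin m × Fin n => w q.1 q.2 = x)).card := by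
      rw [Finset.card_eq_sum_card_fiberwise
        (f := fun q : Fin m × Fin n => Ω (q.1 : ℕ) q.2) (t := Finset.univ)
        (fun q _ => Finset.mem_univ _)]
      refine Finset.sum_congr rfl fun k _ => ?_
      rw [cntF, Finset.filter_filter]
      congr 1
      apply Finset.filter_congr
      intro q _
      simp only [Prod.ext_iff]
      tauto
    have hbij : ((Finset.Icc 0 (m - 1) ×ˢ (Finset.univ : Finset (Fin n))).filter
        (fun q => extendPath n m w q.1 q.2 = x)).card
        = (Finset.univ.filter (fun q : Fin m × Fin n => w q.1 q.2 = x)).card := by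
      refine Finset.card_nbij'
        (i := fun q : ℕ × Fin n => ((⟨q.1 % m, Nat.mod_lt _ (by omega)⟩ : Fin m), q.2))
        (j := fun q : Fin m × Fin n => ((q.1 : ℕ), q.2)) ?_ ?_ ?_ ?_
      · intro a ha
        simp only [Finset.coe_filter, Finset.mem_coe, Set.mem_setOf_eq, Finset.mem_filter, Finset.mem_product, Finset.mem_Icc] at ha
        obtain ⟨⟨ha1, _⟩, ha2⟩ := ha
        have halt : a.1 < m := by omega
        have hmod : a.1 % m = a.1 := Nat.mod_eq_of_lt halt
        simp only [Finset.coe_filter, Finset.mem_coe, Set.mem_setOf_eq, Finset.mem_filter, Finset.mem_univ, true_and]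
        have : extendPath n m w a.1 a.2 = w ⟨a.1 % m, Nat.mod_lt _ (by omega)⟩ a.2 := by
          rw [extendPath, dif_pos halt]
          congr 1
          exact Fin.ext hmod.symm
        rw [← this]; exact ha2
      · intro b hb
        simp only [Finset.coe_filter, Finset.mem_coe, Set.mem_setOf_eq, Finset.mem_filter, Finset.mem_univ, true_and] at hb
        have hblt : (b.1 : ℕ) < m := b.1.isLt
        dsimp only
        refine Finset.mem_filter.mpr ⟨Finset.mem_product.mpr
          ⟨Finset.mem_Icc.mpr ⟨by omega, by omega⟩, Finset.mem_univ _⟩, ?_⟩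
        have : extendPath n m w (b.1 : ℕ) b.2 = w b.1 b.2 := by
          rw [extendPath, dif_pos b.1.isLt]
        rw [this]; exact hb
      · intro a ha
        simp only [Finset.coe_filter, Finset.mem_coe, Set.mem_setOf_eq, Finset.mem_filter, Finset.mem_product, Finset.mem_Icc] at ha
        have halt : a.1 < m := by omega
        have hmod : a.1 % m = a.1 := Nat.mod_eq_of_lt halt
        exact Prod.ext hmod rfl
      · intro b _
        refine Prod.ext (Fin.ext ?_) rfl
        exact Nat.mod_eq_of_lt b.1.isLt
    simp only [empSeg]
    rw [hbij, ← hnum, hden, Nat.cast_sum]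
  have hempsum : ∀ w : Fin m → Fin n → 𝒳,
      ∑ x, empSeg n (extendPath n m w) 0 (m - 1) x = 1 := by
    intro w
    have hmn : ((m * n : ℕ) : ℝ) ≠ 0 := by
      have : 0 < m * n := Nat.mul_pos (by omega) hnpos
      exact_mod_cast this.ne'
    simp only [hemp w]
    rw [← Finset.sum_div, Finset.sum_comm]
    have h1 : ∀ k : Fin K, ∑ x, (cntF Ω w k x : ℝ) = ((m * nk k : ℕ) : ℝ) := by
      intro k; rw [← Nat.cast_sum, hcnt_sum w k]
    rw [Finset.sum_congr rfl fun k _ => h1 k]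
    have h2 : ∑ k, ((m * nk k : ℕ) : ℝ) = ((m * n : ℕ) : ℝ) := by
      push_cast
      rw [← Finset.mul_sum, ← Nat.cast_sum, hn]
    rw [h2, div_self hmn]
  have hempnn : ∀ (w : Fin m → Fin n → 𝒳) (x : 𝒳),
      0 ≤ empSeg n (extendPath n m w) 0 (m - 1) x := by
    intro w x
    simp only [empSeg]
    positivity
  -- ### properties of VF
  have hV0 : ∀ (v : Fin K → 𝒳 → ℕ) k x, 0 ≤ VF (p false) nk m v k x := by
    intro v k x
    rw [VF]
    split
    · exact (hp false k).1 x
    · positivity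
  have hV1 : ∀ (v : Fin K → 𝒳 → ℕ), (∀ k, ∑ x, v k x = m * nk k) →
      ∀ k, ∑ x, VF (p false) nk m v k x = 1 := by
    intro v hv k
    rw [VF]
    split
    · exact (hp false k).2
    · rename_i hk
      rw [← Finset.sum_div, ← Nat.cast_sum, hv k, div_self]
      have : 0 < m * nk k := Nat.mul_pos (by omega) (by omega)
      exact_mod_cast this.ne'
  have hVc : ∀ (v : Fin K → 𝒳 → ℕ), (∀ k, ∑ x, v k x = m * nk k) →
      ∀ k x, (v k x : ℝ) = VF (p false) nk m v k x * ((m * nk k : ℕ) : ℝ) := by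
    intro v hv k x
    rw [VF]
    split
    · rename_i hk
      have hvz : v k x = 0 := by
        have h0 : ∑ y, v k y = 0 := by rw [hv k, hk, mul_zero]
        exact Finset.sum_eq_zero_iff.mp h0 x (Finset.mem_univ x)
      rw [hvz, hk]
      simp
    · rename_i hk
      have hNz : ((m * nk k : ℕ) : ℝ) ≠ 0 := by
        have : 0 < m * nk k := Nat.mul_pos (by omega) (by omega)
        exact_mod_cast this.ne'
      rw [div_mul_cancel₀ _ hNz]
  -- ### the mixture of the per-group types is the global empirical measure
  have hmix : ∀ w : Fin m → Fin n → 𝒳,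
      (fun x => ∑ k, α k * VF (p false) nk m (cntF Ω w) k x)
        = empSeg n (extendPath n m w) 0 (m - 1) := by
    intro w
    funext x
    rw [hemp w x, Finset.sum_div]
    refine Finset.sum_congr rfl fun k _ => ?_
    by_cases hk : nk k = 0
    · rw [hα k, hk, hcnt_zero w k hk x]
      simp
    · rw [hα k, VF, if_neg hk]
      have h1 : (nk k : ℝ) ≠ 0 := by exact_mod_cast hk
      have h2 : (n : ℝ) ≠ 0 := by exact_mod_cast hnpos.ne'
      have h3 : (m : ℝ) ≠ 0 := by
        have : (0:ℕ) < m := by omega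
        exact_mod_cast this.ne'
      push_cast
      field_simp
  -- ### recursion for nuhat
  have hrec : ∀ (ω : ℕ → Fin n → 𝒳) (s : ℕ),
      nuhat n α (p false) (p true) ω (s + 1) =
        if Wstat n α (p false) (p true) ω (nuhat n α (p false) (p true) ω s) s ≤ 0
        then s + 1 else nuhat n α (p false) (p true) ω s := fun ω s => rfl
  -- ### event implies the empirical measure lies in Gam
  have hGamMem : ∀ w : Fin m → Fin n → 𝒳,
      (∀ s : Fin m, 0 < What n α (p false) (p true) (extendPath n m w) (s : ℕ)) →
      empSeg n (extendPath n m w) 0 (m - 1) ∈ Gam := by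
    intro w hw
    set ω := extendPath n m w with hω
    have hnu : ∀ s, s ≤ m → nuhat n α (p false) (p true) ω s = 0 := by
      intro s
      induction s with
      | zero => intro _; rfl
      | succ s ih =>
        intro hs
        have hws : 0 < What n α (p false) (p true) ω s := hw ⟨s, by omega⟩
        have hn' : ¬ Wstat n α (p false) (p true) ω
            (nuhat n α (p false) (p true) ω s) s ≤ 0 := not_le.mpr hws
        rw [hrec ω s, if_neg hn']
        exact ih (by omega)
    have hW : 0 < Wstat n α (p false) (p true) ω 0 (m - 1) := by
      have h1 : 0 < What n α (p false) (p true) ω (m - 1) := hw ⟨m - 1, by omega⟩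
      have h2 := hnu (m - 1) (by omega)
      rw [What, h2] at h1
      exact h1
    have hfPlt : fP α (p true) (empSeg n ω 0 (m - 1)) < fP α (p false) (empSeg n ω 0 (m - 1)) := by
      by_contra hAB
      push_neg at hAB
      rw [Wstat] at hW
      set A := fP α (p false) (empSeg n ω 0 (m - 1)) with hA
      set B := fP α (p true) (empSeg n ω 0 (m - 1)) with hB
      have hcpos : (0:ℝ) < (((m - 1 - 0 + 1) * n : ℕ) : ℝ) := by
        have : 0 < (m - 1 - 0 + 1) * n := Nat.mul_pos (by omega) hnpos
        exact_mod_cast this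
      rcases eq_or_ne B ⊤ with hBt | hBt
      · rw [hBt, EReal.coe_ennreal_top] at hW
        rw [sub_eq_add_neg, EReal.neg_top, EReal.add_bot, EReal.coe_mul_bot_of_pos hcpos] at hW
        exact absurd hW (by simp)
      · have hAt : A ≠ ⊤ := fun hAt => hBt (top_le_iff.mp (hAt ▸ hAB))
        have haA : A = ((A.toNNReal : NNReal) : ℝ≥0∞) := (ENNReal.coe_toNNReal hAt).symm
        have hbB : B = ((B.toNNReal : NNReal) : ℝ≥0∞) := (ENNReal.coe_toNNReal hBt).symm
        rw [haA, hbB, EReal.coe_nnreal_eq_coe_real, EReal.coe_nnreal_eq_coe_real,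
          ← EReal.coe_sub, ← EReal.coe_mul] at hW
        have hab : ((A.toNNReal : NNReal) : ℝ) ≤ ((B.toNNReal : NNReal) : ℝ) := by
          rw [haA, hbB] at hAB
          exact_mod_cast hAB
        have hle : (((m - 1 - 0 + 1) * n : ℕ) : ℝ)
            * (((A.toNNReal : NNReal) : ℝ) - ((B.toNNReal : NNReal) : ℝ)) ≤ 0 :=
          mul_nonpos_of_nonneg_of_nonpos hcpos.le (by linarith)
        have := EReal.coe_pos.mp hW
        linarith
    rw [hGam]
    exact ⟨⟨hempnn w, hempsum w⟩, hfPlt⟩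
  -- ### h is below the per-type divergence sum
  have hhle : ∀ w : Fin m → Fin n → 𝒳,
      (∀ s : Fin m, 0 < What n α (p false) (p true) (extendPath n m w) (s : ℕ)) →
      h ≤ ∑ k, ((nk k : ℕ) : ℝ≥0∞) * klD (VF (p false) nk m (cntF Ω w) k) (p false k) := by
    intro w hw
    rw [hh]
    refine iInf_le_of_le (fun k => VF (p false) nk m (cntF Ω w) k) ?_
    refine iInf_le_of_le ⟨fun k => ⟨fun x => hV0 (cntF Ω w) k x, hV1 (cntF Ω w) (hcnt_sum w) k⟩,
      ?_⟩ le_rfl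
    rw [hmix w]
    exact hGamMem w hw
  -- ### per-sequence master bound
  have hmaster : ∀ w : Fin m → Fin n → 𝒳,
      (∀ s : Fin m, 0 < What n α (p false) (p true) (extendPath n m w) (s : ℕ)) →
      ENNReal.ofReal (∏ t : Fin m, ∏ i, p false (Ω (t : ℕ) i) (w t i))
        ≤ EReal.exp (-(((m : ℝ≥0∞) * h : ℝ≥0∞) : EReal))
          * ENNReal.ofReal (∏ t : Fin m, ∏ i, VF (p false) nk m (cntF Ω w) (Ω (t : ℕ) i) (w t i)) := by
    intro w hw
    have hvs : ∀ k, ∑ x, cntF Ω w k x = m * nk k := hcnt_sum w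
    rw [hprod w (p false), hprod w (VF (p false) nk m (cntF Ω w)),
      ENNReal.ofReal_prod_of_nonneg
        (fun k _ => Finset.prod_nonneg fun x _ => pow_nonneg ((hp false k).1 x) _),
      ENNReal.ofReal_prod_of_nonneg
        (fun k _ => Finset.prod_nonneg fun x _ => pow_nonneg (hV0 (cntF Ω w) k x) _)]
    calc ∏ k, ENNReal.ofReal (∏ x, p false k x ^ cntF Ω w k x)
        ≤ ∏ k, (EReal.exp (-((((m * nk k : ℕ) : ℝ≥0∞)
              * klD (VF (p false) nk m (cntF Ω w) k) (p false k) : ℝ≥0∞) : EReal))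
            * ENNReal.ofReal (∏ x, VF (p false) nk m (cntF Ω w) k x ^ cntF Ω w k x)) := by
          refine Finset.prod_le_prod' fun k _ => ?_
          exact aux_perk (p false k) (VF (p false) nk m (cntF Ω w) k) (cntF Ω w k) (m * nk k)
            (hp false k).1 (hp false k).2 (fun x => hV0 (cntF Ω w) k x)
            (hV1 (cntF Ω w) hvs k) (fun x => hVc (cntF Ω w) hvs k x)
      _ = (∏ k, EReal.exp (-((((m * nk k : ℕ) : ℝ≥0∞)
              * klD (VF (p false) nk m (cntF Ω w) k) (p false k) : ℝ≥0∞) : EReal)))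
            * ∏ k, ENNReal.ofReal (∏ x, VF (p false) nk m (cntF Ω w) k x ^ cntF Ω w k x) :=
          Finset.prod_mul_distrib
      _ ≤ EReal.exp (-(((m : ℝ≥0∞) * h : ℝ≥0∞) : EReal))
            * ∏ k, ENNReal.ofReal (∏ x, VF (p false) nk m (cntF Ω w) k x ^ cntF Ω w k x) := by
          refine mul_le_mul_left ?_ _
          rw [aux_exp_sum]
          refine EReal.exp_monotone ?_
          refine EReal.neg_le_neg_iff.mpr ?_
          refine EReal.coe_ennreal_le_coe_ennreal_iff.mpr ?_
          calc (m : ℝ≥0∞) * h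
              ≤ (m : ℝ≥0∞) * ∑ k, ((nk k : ℕ) : ℝ≥0∞)
                  * klD (VF (p false) nk m (cntF Ω w) k) (p false k) :=
                mul_le_mul_right (hhle w hw) _
            _ = ∑ k, (((m * nk k : ℕ) : ℝ≥0∞))
                  * klD (VF (p false) nk m (cntF Ω w) k) (p false k) := by
                rw [Finset.mul_sum]
                refine Finset.sum_congr rfl fun k _ => ?_
                push_cast
                rw [mul_assoc]
  -- ### the sum of dominating products is at most the number of type tuples
  have hTsum : ∑ w ∈ Finset.univ.filter (fun w : Fin m → Fin n → 𝒳 =>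
        ∀ s : Fin m, 0 < What n α (p false) (p true) (extendPath n m w) s),
      ENNReal.ofReal (∏ t : Fin m, ∏ i, VF (p false) nk m (cntF Ω w) (Ω (t : ℕ) i) (w t i))
      ≤ ∏ k, (Nat.card (typeSet 𝒳 (m * nk k)) : ℝ≥0∞) := by
    set E := Finset.univ.filter (fun w : Fin m → Fin n → 𝒳 =>
        ∀ s : Fin m, 0 < What n α (p false) (p true) (extendPath n m w) s) with hE
    rw [← Finset.sum_fiberwise_of_maps_to (g := cntF Ω) (t := E.image (cntF Ω))
      (fun w hw => Finset.mem_image_of_mem (cntF Ω) hw)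
      (fun w => ENNReal.ofReal
        (∏ t : Fin m, ∏ i, VF (p false) nk m (cntF Ω w) (Ω (t : ℕ) i) (w t i)))]
    have hsumv : ∀ v ∈ E.image (cntF Ω), ∀ k, ∑ x, v k x = m * nk k := by
      intro v hv k
      obtain ⟨w0, _, rfl⟩ := Finset.mem_image.mp hv
      exact hcnt_sum w0 k
    have hinner : ∀ v ∈ E.image (cntF Ω),
        (∑ w ∈ E.filter (fun w => cntF Ω w = v),
          ENNReal.ofReal (∏ t : Fin m, ∏ i, VF (p false) nk m (cntF Ω w) (Ω (t : ℕ) i) (w t i)))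
          ≤ 1 := by
      intro v hv
      calc ∑ w ∈ E.filter (fun w => cntF Ω w = v),
            ENNReal.ofReal (∏ t : Fin m, ∏ i, VF (p false) nk m (cntF Ω w) (Ω (t : ℕ) i) (w t i))
          = ∑ w ∈ E.filter (fun w => cntF Ω w = v),
            ∏ t : Fin m, ∏ i, ENNReal.ofReal (VF (p false) nk m v (Ω (t : ℕ) i) (w t i)) := by
            refine Finset.sum_congr rfl fun w hw => ?_
            rw [(Finset.mem_filter.mp hw).2,
              ENNReal.ofReal_prod_of_nonneg (fun t _ => Finset.prod_nonneg fun i _ => hV0 v _ _)]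
            exact Finset.prod_congr rfl fun t _ =>
              ENNReal.ofReal_prod_of_nonneg (fun i _ => hV0 v _ _)
        _ ≤ ∑ w : Fin m → Fin n → 𝒳,
            ∏ t : Fin m, ∏ i, ENNReal.ofReal (VF (p false) nk m v (Ω (t : ℕ) i) (w t i)) :=
            Finset.sum_le_sum_of_subset (Finset.subset_univ _)
        _ = ∏ t : Fin m, ∏ i, ∑ x, ENNReal.ofReal (VF (p false) nk m v (Ω (t : ℕ) i) x) :=
            aux_sum_prod (fun t i z => ENNReal.ofReal (VF (p false) nk m v (Ω (t : ℕ) i) z))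
        _ = 1 := by
            refine Finset.prod_eq_one fun t _ => Finset.prod_eq_one fun i _ => ?_
            rw [← ENNReal.ofReal_sum_of_nonneg (fun x _ => hV0 v _ x),
              hV1 v (hsumv v hv) (Ω (t : ℕ) i)]
            exact ENNReal.ofReal_one
    calc ∑ v ∈ E.image (cntF Ω), (∑ w ∈ E.filter (fun w => cntF Ω w = v),
          ENNReal.ofReal (∏ t : Fin m, ∏ i, VF (p false) nk m (cntF Ω w) (Ω (t : ℕ) i) (w t i)))
        ≤ ∑ _v ∈ E.image (cntF Ω), (1 : ℝ≥0∞) := Finset.sum_le_sum hinner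
      _ = ((E.image (cntF Ω)).card : ℝ≥0∞) := by
          rw [Finset.sum_const, nsmul_eq_mul, mul_one]
      _ ≤ ∏ k, (Nat.card (typeSet 𝒳 (m * nk k)) : ℝ≥0∞) := by
          rw [← Nat.cast_prod]
          refine Nat.cast_le.mpr ?_
          haveI : ∀ k : Fin K, Finite (typeSet 𝒳 (m * nk k)) :=
            fun k => (typeSet_finite (m * nk k)).to_subtype
          let F : (E.image (cntF Ω) : Finset (Fin K → 𝒳 → ℕ)) → ∀ k : Fin K, typeSet 𝒳 (m * nk k) :=
            fun v k => ⟨fun x => ((v.1 k x : ℕ) : ℝ) / ((m * nk k : ℕ) : ℝ),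
              v.1 k, fun x => rfl, hsumv v.1 v.2 k⟩
          have hinj : Function.Injective F := by
            intro v v' hvv
            apply Subtype.ext
            funext k x
            have h1 := congrFun (congrArg Subtype.val (congrFun hvv k)) x
            simp only [F] at h1
            rcases Nat.eq_zero_or_pos (m * nk k) with h0 | h0
            · have hz := hsumv v.1 v.2 k
              have hz' := hsumv v'.1 v'.2 k
              rw [h0] at hz hz'
              have e1 := Finset.sum_eq_zero_iff.mp hz x (Finset.mem_univ x)
              have e2 := Finset.sum_eq_zero_iff.mp hz' x (Finset.mem_univ x)
              omega
            · have hN : ((m * nk k : ℕ) : ℝ) ≠ 0 := by exact_mod_cast h0.ne'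
              rw [div_eq_div_iff hN hN] at h1
              have h3 := mul_right_cancel₀ hN h1
              exact_mod_cast h3
          calc (E.image (cntF Ω)).card
              = Nat.card (E.image (cntF Ω) : Finset (Fin K → 𝒳 → ℕ)) :=
                (Nat.card_eq_finsetCard _).symm
            _ ≤ Nat.card (∀ k : Fin K, typeSet 𝒳 (m * nk k)) :=
                Nat.card_le_card_of_injective F hinj
            _ = ∏ k, Nat.card (typeSet 𝒳 (m * nk k)) := Nat.card_pi
  -- ### final assembly
  rw [ENNReal.ofReal_sum_of_nonneg
    (fun w _ => Finset.prod_nonneg fun t _ => Finset.prod_nonneg fun i _ => (hp false _).1 _)]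
  calc ∑ w ∈ Finset.univ.filter (fun w : Fin m → Fin n → 𝒳 =>
        ∀ s : Fin m, 0 < What n α (p false) (p true) (extendPath n m w) s),
        ENNReal.ofReal (∏ t : Fin m, ∏ i, p false (Ω (t : ℕ) i) (w t i))
      ≤ ∑ w ∈ Finset.univ.filter (fun w : Fin m → Fin n → 𝒳 =>
        ∀ s : Fin m, 0 < What n α (p false) (p true) (extendPath n m w) s),
        EReal.exp (-(((m : ℝ≥0∞) * h : ℝ≥0∞) : EReal))
          * ENNReal.ofReal (∏ t : Fin m, ∏ i, VF (p false) nk m (cntF Ω w) (Ω (t : ℕ) i) (w t i)) := by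
        refine Finset.sum_le_sum fun w hw => hmaster w ?_
        exact (Finset.mem_filter.mp hw).2
    _ = EReal.exp (-(((m : ℝ≥0∞) * h : ℝ≥0∞) : EReal))
          * ∑ w ∈ Finset.univ.filter (fun w : Fin m → Fin n → 𝒳 =>
            ∀ s : Fin m, 0 < What n α (p false) (p true) (extendPath n m w) s),
            ENNReal.ofReal (∏ t : Fin m, ∏ i, VF (p false) nk m (cntF Ω w) (Ω (t : ℕ) i) (w t i)) := by
        rw [Finset.mul_sum]
    _ ≤ EReal.exp (-(((m : ℝ≥0∞) * h : ℝ≥0∞) : EReal))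
          * ∏ k, (Nat.card (typeSet 𝒳 (m * nk k)) : ℝ≥0∞) := mul_le_mul_right hTsum _
    _ = _ := mul_comm _ _
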